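/- For the Weibull distribution with cdf F₀(x) = 1 - exp(-x^β), x > 0, β ∈ (0,1), and any k > 0, M ∈ ℝ, and α₀ ∈ (0, min(1/2, 1/β - 1)): F₀(F₀^{-1}(1 - k/n) + M(ln n)^{α₀}) = 1 - k/n + o(1/n) as n → ∞. -/

import Mathlib

open Filter

/-- Auxiliary: `|(1+t)^β - 1| ≤ |t|` for `β ∈ (0,1]` and `t > -1`. -/
lemma abs_rpow_one_add_sub_one_le {β t : ℝ} (hβ0 : 0 < β) (hβ1 : β ≤ 1) (ht : -1 < t) :
    |(1 + t) ^ β - 1| ≤ |t| := by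
  have hx : (0:ℝ) < 1 + t := by linarith
  rcases le_or_gt 0 t with h0 | h0
  · -- t ≥ 0 : 0 ≤ (1+t)^β - 1 ≤ t
    have h1 : (1:ℝ) ≤ (1 + t) ^ β := Real.one_le_rpow (by linarith) hβ0.le
    have hupper : (1 + t) ^ β ≤ 1 + t := by
      set s := (1 + t) ^ β - 1 with hs
      have hs0 : 0 ≤ s := by simp only [hs]; linarith
      have hb : 1 + (1/β) * s ≤ (1 + s) ^ (1/β) :=
        one_add_mul_self_le_rpow_one_add (by linarith) (one_le_one_div hβ0 hβ1)
      have h2 : (1 + s) ^ (1/β) = 1 + t := by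
        have h3 : (1:ℝ) + s = (1 + t) ^ β := by simp [hs]
        rw [h3, ← Real.rpow_mul hx.le, mul_one_div, div_self hβ0.ne', Real.rpow_one]
      rw [h2] at hb
      have hsb : s / β ≤ t := by linarith [one_div_mul_eq_div β s ▸ hb]
      have hst : s ≤ β * t := by
        rw [div_le_iff₀ hβ0] at hsb
        linarith [hsb]
      nlinarith
    rw [abs_of_nonneg (by linarith), abs_of_nonneg h0]; linarith
  · -- t < 0 : t ≤ (1+t)^β - 1 ≤ 0
    have h1 : (1 + t) ^ β ≤ 1 := Real.rpow_le_one hx.le (by linarith) hβ0.le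
    have h2 : 1 + t ≤ (1 + t) ^ β := by
      have := Real.rpow_le_rpow_of_exponent_ge hx (by linarith) hβ1
      rwa [Real.rpow_one] at this
    rw [abs_of_nonpos (by linarith), abs_of_neg h0]; linarith

/-- Weibull cdf `F₀(x) = 1 - exp(-x^β)` for `x > 0`. -/
noncomputable def weibullCDF (β x : ℝ) : ℝ := if 0 < x then 1 - Real.exp (-(x ^ β)) else 0

/-- Shifting the `(1-k/n)`-quantile of the Weibull distribution (shape `β ∈ (0,1)`) by
`M (ln n)^{α₀}` changes the cdf value only by `o(1/n)`, provided `α₀ < min(1/2, 1/β - 1)`. -/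
theorem weibull_quantile_shift (β M k α₀ : ℝ) (hβ : β ∈ Set.Ioo (0 : ℝ) 1) (hk : 0 < k)
    (hα₀ : α₀ ∈ Set.Ioo (0 : ℝ) (min (1 / 2) (1 / β - 1))) :
    (fun n : ℕ => weibullCDF β ((Real.log ((n : ℝ) / k)) ^ (1 / β) + M * (Real.log n) ^ α₀)
      - (1 - k / (n : ℝ)))
      =o[atTop] fun n : ℕ => 1 / (n : ℝ) := by
  obtain ⟨hβ0, hβ1⟩ := hβ
  obtain ⟨hα0, hαm⟩ := hα₀
  have hβinv : 1 < 1 / β := (one_lt_one_div hβ0 hβ1)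
  have hγ : α₀ < 1 / β - 1 := lt_of_lt_of_le hαm (min_le_right _ _)
  set L : ℕ → ℝ := fun n => Real.log ((n : ℝ) / k) with hL
  set s : ℕ → ℝ := fun n => (Real.log n) ^ α₀ with hsdef
  set t : ℕ → ℝ := fun n => M * s n / (L n) ^ (1/β) with htdef
  have hlogn : Tendsto (fun n : ℕ => Real.log n) atTop atTop :=
    Real.tendsto_log_atTop.comp tendsto_natCast_atTop_atTop
  have hLtend : Tendsto L atTop atTop := by
    have h : Tendsto (fun n : ℕ => Real.log n - Real.log k) atTop atTop :=
      hlogn.atTop_add tendsto_const_nhds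
    refine h.congr' ?_
    filter_upwards [eventually_gt_atTop 0] with n hn
    rw [hL]; simp only
    rw [Real.log_div (by positivity) hk.ne']
  -- eventual basic facts
  have hBase : ∀ᶠ n : ℕ in atTop, 1 ≤ Real.log n ∧ Real.log n / 2 ≤ L n ∧ 0 < L n ∧
      0 < (n:ℝ) := by
    filter_upwards [hlogn.eventually_ge_atTop 1,
      hlogn.eventually_ge_atTop (2 * Real.log k), eventually_gt_atTop 0] with n h1 h2 h3
    have hn : (0:ℝ) < n := by positivity
    have hLn : L n = Real.log n - Real.log k := by
      rw [hL]; simp only; rw [Real.log_div (by positivity) hk.ne']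
    exact ⟨h1, by rw [hLn]; linarith, by rw [hLn]; linarith, hn⟩
  -- Step A : L n * t n → 0
  have hLt : Tendsto (fun n => L n * t n) atTop (nhds 0) := by
    apply squeeze_zero_norm' (a := fun n : ℕ =>
        |M| * 2 ^ (1/β - 1) * (Real.log n) ^ (α₀ - (1/β - 1)))
    · filter_upwards [hBase] with n ⟨hl1, hhalf, hLpos, _⟩
      have hlpos : (0:ℝ) < Real.log n := by linarith
      have hid : L n * t n = M * s n * L n ^ (1 - 1/β) := by
        rw [htdef]; simp only
        rw [Real.rpow_sub hLpos, Real.rpow_one]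
        field_simp
      have hs0 : 0 ≤ s n := Real.rpow_nonneg hlpos.le α₀
      have hr0 : 0 ≤ L n ^ (1 - 1/β) := Real.rpow_nonneg hLpos.le _
      have hbound : L n ^ (1 - 1/β) ≤ (Real.log n / 2) ^ (1 - 1/β) :=
        Real.rpow_le_rpow_of_nonpos (by linarith) hhalf (by linarith)
      have heq : (Real.log n / 2) ^ (1 - 1/β) =
          (Real.log n) ^ (1 - 1/β) * 2 ^ (1/β - 1) := by
        rw [Real.div_rpow hlpos.le (by norm_num : (0:ℝ) ≤ 2)]
        rw [show (1 - 1/β) = -(1/β - 1) by ring, Real.rpow_neg (by norm_num : (0:ℝ) ≤ 2)]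
        rw [div_eq_mul_inv, inv_inv]
      have hfin : s n * ((Real.log n) ^ (1 - 1/β) * 2 ^ (1/β - 1)) =
          2 ^ (1/β - 1) * (Real.log n) ^ (α₀ - (1/β - 1)) := by
        rw [hsdef]; simp only
        rw [show α₀ - (1/β - 1) = α₀ + (1 - 1/β) by ring, Real.rpow_add hlpos]
        ring
      calc ‖L n * t n‖ = |M| * (s n * L n ^ (1 - 1/β)) := by
            rw [hid, Real.norm_eq_abs, abs_mul, abs_mul, abs_of_nonneg hs0,
              abs_of_nonneg hr0, mul_assoc]
        _ ≤ |M| * (s n * ((Real.log n) ^ (1 - 1/β) * 2 ^ (1/β - 1))) := by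
            rw [← heq]
            exact mul_le_mul_of_nonneg_left
              (mul_le_mul_of_nonneg_left hbound hs0) (abs_nonneg M)
        _ = |M| * 2 ^ (1/β - 1) * (Real.log n) ^ (α₀ - (1/β - 1)) := by
            rw [hfin]; ring
    · have hpos : 0 < 1/β - 1 - α₀ := by linarith
      have h0 : Tendsto (fun x : ℝ => x ^ (-(1/β - 1 - α₀))) atTop (nhds 0) :=
        tendsto_rpow_neg_atTop hpos
      have h1 : Tendsto (fun n : ℕ => (Real.log n) ^ (α₀ - (1/β - 1))) atTop (nhds 0) := by
        have := h0.comp hlogn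
        simpa [Function.comp_def, show -(1/β - 1 - α₀) = α₀ - (1/β - 1) by ring] using this
      simpa using (tendsto_const_nhds (x := |M| * 2 ^ (1/β - 1))).mul h1
  -- Step B : t n → 0
  have ht0 : Tendsto t atTop (nhds 0) := by
    have h : Tendsto (fun n => (L n * t n) * (L n)⁻¹) atTop (nhds 0) := by
      simpa using hLt.mul hLtend.inv_tendsto_atTop
    refine h.congr' ?_
    filter_upwards [hLtend.eventually_gt_atTop 0] with n hn
    rw [mul_comm (L n), mul_assoc, mul_inv_cancel₀ hn.ne', mul_one]
  have hts : ∀ᶠ n : ℕ in atTop, |t n| < 1/2 := by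
    filter_upwards [ht0.eventually_lt_const (by norm_num : (0:ℝ) < 1/2),
      ht0.eventually_const_lt (by norm_num : (-(1/2):ℝ) < 0)] with n h1 h2
    rw [abs_lt]; exact ⟨h2, h1⟩
  -- Step C : δ n := L n * ((1 + t n)^β - 1) → 0
  have hδ : Tendsto (fun n => L n * ((1 + t n) ^ β - 1)) atTop (nhds 0) := by
    apply squeeze_zero_norm' (a := fun n => |L n * t n|)
    · filter_upwards [hBase, hts] with n ⟨_, _, hLpos, _⟩ htn
      have htn' := htn
      have ht1 : -1 < t n := by
        have := (abs_lt.mp htn').1; linarith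
      have hkey := abs_rpow_one_add_sub_one_le hβ0 hβ1.le ht1
      rw [Real.norm_eq_abs, abs_mul, abs_mul]
      exact mul_le_mul_of_nonneg_left hkey (abs_nonneg _)
    · simpa using hLt.abs
  -- Final step
  have hgf : ∀ᶠ n : ℕ in atTop, 1 / (n:ℝ) = 0 →
      weibullCDF β ((Real.log ((n : ℝ) / k)) ^ (1 / β) + M * (Real.log n) ^ α₀)
        - (1 - k / (n : ℝ)) = 0 := by
    filter_upwards [eventually_gt_atTop 0] with n hn h
    have hn' : (0:ℝ) < n := by positivity
    exact absurd h (by positivity)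
  rw [Asymptotics.isLittleO_iff_tendsto' hgf]
  have hfin : Tendsto (fun n : ℕ => k - k * Real.exp (-(L n * ((1 + t n) ^ β - 1))))
      atTop (nhds 0) := by
    have hexp0 : Tendsto (fun n : ℕ => Real.exp (-(L n * ((1 + t n) ^ β - 1))))
        atTop (nhds 1) := by
      have hδ' : Tendsto (fun n => -(L n * ((1 + t n) ^ β - 1))) atTop (nhds 0) := by
        simpa using hδ.neg
      have h := (Real.continuous_exp.tendsto 0).comp hδ'
      simpa [Function.comp_def] using h
    have h := (tendsto_const_nhds (x := k)).sub
      ((tendsto_const_nhds (x := k)).mul hexp0)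
    simpa using h
  refine Tendsto.congr' ?_ hfin
  filter_upwards [hBase, hts] with n ⟨hl1, hhalf, hLpos, hnpos⟩ htn
  have htn' := htn
  have h1t : (0:ℝ) < 1 + t n := by
    have := (abs_lt.mp htn').1; linarith
  set Lr := L n ^ (1/β) with hLr
  have hLrpos : 0 < Lr := Real.rpow_pos_of_pos hLpos _
  have hMs : M * s n = t n * Lr := by
    rw [htdef]; simp only
    field_simp
    rfl
  have hx : L n ^ (1/β) + M * s n = Lr * (1 + t n) := by rw [hMs, hLr]; ring
  have hxpos : 0 < Lr * (1 + t n) := mul_pos hLrpos h1t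
  have hpow : (Lr * (1 + t n)) ^ β = L n * (1 + t n) ^ β := by
    rw [Real.mul_rpow hLrpos.le h1t.le, hLr, ← Real.rpow_mul hLpos.le,
      one_div_mul_cancel hβ0.ne', Real.rpow_one]
  have hexp : Real.exp (-(L n)) = k / n := by
    have hlog : Real.exp (L n) = (n:ℝ) / k := by
      rw [hL]; exact Real.exp_log (by positivity)
    rw [Real.exp_neg, hlog, inv_div]
  have hsplit : Real.exp (-(L n * (1 + t n) ^ β)) =
      (k / n) * Real.exp (-(L n * ((1 + t n) ^ β - 1))) := by
    rw [← hexp, ← Real.exp_add]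
    ring_nf
  have hw : weibullCDF β ((Real.log ((n : ℝ) / k)) ^ (1 / β) + M * (Real.log n) ^ α₀)
      = 1 - Real.exp (-(L n * (1 + t n) ^ β)) := by
    have hL' : Real.log ((n:ℝ)/k) = L n := rfl
    have hs' : (Real.log (n:ℝ)) ^ α₀ = s n := rfl
    rw [hL', hs', hx, weibullCDF, if_pos hxpos, hpow]
  rw [hw, hsplit]
  have hn0 : (n:ℝ) ≠ 0 := hnpos.ne'
  field_simp
  ring
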